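/- The alternating tree poset P (on {p} ∪ finite sequences of naturals) is not representable: there is no topology τ on P making (P; τ, ≤) a Priestley space. -/

import Mathlib

/-- The generating relations of the alternating tree poset `P`.
Elements of `P` are coded by lists of naturals: `[]` is the root `p`, and
`[i₀, …, iₙ]` is `p_{i₀,…,iₙ}` (an element at level `n`).
The rules are exactly the displayed inequalities of the paper:
* `p < p_i`, and `p_i < p_j` for `j < i`;
* for an even level parent `p_{i₀,…,i_{2r}}` (prefix `t` of even length, last entry `m`):
  `p_{i₀,…,i_{2r},i} < p_{i₀,…,i_{2r},j}` for `i < j`, and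
  `p_{i₀,…,i_{2r},j} < p_{i₀,…,i_{2r-1},k}` for `k ≤ m`;
* for an odd level parent `p_{i₀,…,i_{2r+1}}` (prefix `t` of odd length, last entry `m`):
  `p_{i₀,…,i_{2r},k} < p_{i₀,…,i_{2r+1},i}` for `k ≤ m`, and
  `p_{i₀,…,i_{2r+1},i} < p_{i₀,…,i_{2r+1},j}` for `j < i`. -/
inductive TreeStep : List ℕ → List ℕ → Prop
  | root_lt (i : ℕ) : TreeStep [] [i]
  | root_sib {i j : ℕ} : j < i → TreeStep [i] [j]
  | even_sib (t : List ℕ) (ht : Even t.length) (m i j : ℕ) :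
      i < j → TreeStep (t ++ [m, i]) (t ++ [m, j])
  | even_up (t : List ℕ) (ht : Even t.length) (m k j : ℕ) :
      k ≤ m → TreeStep (t ++ [m, j]) (t ++ [k])
  | odd_down (t : List ℕ) (ht : Odd t.length) (m k i : ℕ) :
      k ≤ m → TreeStep (t ++ [k]) (t ++ [m, i])
  | odd_sib (t : List ℕ) (ht : Odd t.length) (m i j : ℕ) :
      j < i → TreeStep (t ++ [m, i]) (t ++ [m, j])

/-- The order `≤` of the alternating tree poset `P`: the reflexive transitive closure
of the generating relations. -/
def TreeLe : List ℕ → List ℕ → Prop := Relation.ReflTransGen TreeStep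

/- ### Auxiliary material: an explicit description of the order -/

namespace TreeAux

/-- rewriting two-element appends -/
lemma app2 (s : List ℕ) (m x : ℕ) : s ++ [m, x] = (s ++ [m]) ++ [x] := by simp

/-- cancellation for one-element appends -/
lemma cc {s t : List ℕ} {i j : ℕ} (h : s ++ [i] = t ++ [j]) : s = t ∧ i = j := by
  have h2 := List.append_inj' h rfl
  exact ⟨h2.1, by simpa using h2.2⟩

/-- Explicit description of the order of the alternating tree. -/
def R (a b : List ℕ) : Prop :=
  a = b
  ∨ (∃ s i j, j ≤ i ∧ s.length % 2 = 0 ∧ a = s ++ [i] ∧ b = s ++ [j])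
  ∨ (∃ s i j, i ≤ j ∧ s.length % 2 = 1 ∧ a = s ++ [i] ∧ b = s ++ [j])
  ∨ (a = [] ∧ ∃ j, b = [j])
  ∨ (∃ s k m x, k ≤ m ∧ s.length % 2 = 1 ∧ a = s ++ [k] ∧ b = s ++ [m, x])
  ∨ (∃ s k m x, k ≤ m ∧ s.length % 2 = 0 ∧ a = s ++ [m, x] ∧ b = s ++ [k])

lemma R_refl (a : List ℕ) : R a a := Or.inl rfl

lemma step_R {a b : List ℕ} (h : TreeStep a b) : R a b := by
  induction h with
  | root_lt i => exact Or.inr (Or.inr (Or.inr (Or.inl ⟨rfl, i, rfl⟩)))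
  | root_sib h =>
      exact Or.inr (Or.inl ⟨[], _, _, le_of_lt h, rfl, rfl, rfl⟩)
  | even_sib t ht m i j h =>
      refine Or.inr (Or.inr (Or.inl ⟨t ++ [m], i, j, le_of_lt h, ?_, app2 t m i, app2 t m j⟩))
      have := Nat.even_iff.mp ht
      simp only [List.length_append, List.length_cons, List.length_nil]
      omega
  | even_up t ht m k j h =>
      exact Or.inr (Or.inr (Or.inr (Or.inr (Or.inr
        ⟨t, k, m, j, h, Nat.even_iff.mp ht, rfl, rfl⟩))))
  | odd_down t ht m k i h =>
      exact Or.inr (Or.inr (Or.inr (Or.inr (Or.inl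
        ⟨t, k, m, i, h, Nat.odd_iff.mp ht, rfl, rfl⟩))))
  | odd_sib t ht m i j h =>
      refine Or.inr (Or.inl ⟨t ++ [m], i, j, le_of_lt h, ?_, app2 t m i, app2 t m j⟩)
      have := Nat.odd_iff.mp ht
      simp only [List.length_append, List.length_cons, List.length_nil]
      omega

lemma R_trans {a b c : List ℕ} (h1 : R a b) (h2 : R b c) : R a c := by
  rcases h1 with rfl | h1
  · exact h2
  rcases h2 with rfl | h2
  · exact Or.inr h1
  rcases h1 with ⟨s, i, j, hji, hs, rfl, rfl⟩ | ⟨s, i, j, hij, hs, rfl, rfl⟩ |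
      ⟨rfl, j, rfl⟩ | ⟨s, k, m, x, hkm, hs, rfl, rfl⟩ | ⟨s, k, m, x, hkm, hs, rfl, rfl⟩ <;>
    rcases h2 with ⟨s', i', j', h', hs', hb, rfl⟩ | ⟨s', i', j', h', hs', hb, rfl⟩ |
      ⟨hb, j', rfl⟩ | ⟨s', k', m', x', h', hs', hb, rfl⟩ | ⟨s', k', m', x', h', hs', hb, rfl⟩
  -- first: C1 (s even, a = s++[i], b = s++[j], j ≤ i)
  · -- C1 ∘ C1
    obtain ⟨rfl, rfl⟩ := cc hb
    exact Or.inr (Or.inl ⟨s, i, j', le_trans h' hji, hs, rfl, rfl⟩)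
  · obtain ⟨rfl, rfl⟩ := cc hb; omega
  · simp at hb
  · obtain ⟨rfl, rfl⟩ := cc hb; omega
  · rw [app2] at hb
    obtain ⟨rfl, rfl⟩ := cc hb
    simp only [List.length_append, List.length_cons, List.length_nil] at hs
    omega
  -- first: C2 (s odd, a = s++[i], b = s++[j], i ≤ j)
  · obtain ⟨rfl, rfl⟩ := cc hb; omega
  · -- C2 ∘ C2
    obtain ⟨rfl, rfl⟩ := cc hb
    exact Or.inr (Or.inr (Or.inl ⟨s, i, j', le_trans hij h', hs, rfl, rfl⟩))
  · simp at hb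
  · -- C2 ∘ C5
    obtain ⟨rfl, rfl⟩ := cc hb
    exact Or.inr (Or.inr (Or.inr (Or.inr (Or.inl
      ⟨s, i, m', x', le_trans hij h', hs, rfl, rfl⟩))))
  · -- C2 ∘ C6
    rw [app2] at hb
    obtain ⟨rfl, rfl⟩ := cc hb
    exact Or.inr (Or.inr (Or.inr (Or.inr (Or.inr
      ⟨s', k', m', i, h', hs', (app2 s' m' i).symm, rfl⟩))))
  -- first: C3 (a = [], b = [j])
  · -- C3 ∘ C1
    have hb' : ([] : List ℕ) ++ [j] = s' ++ [i'] := by simpa using hb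
    obtain ⟨rfl, rfl⟩ := cc hb'
    exact Or.inr (Or.inr (Or.inr (Or.inl ⟨rfl, j', by simp⟩)))
  · have hb' : ([] : List ℕ) ++ [j] = s' ++ [i'] := by simpa using hb
    obtain ⟨rfl, rfl⟩ := cc hb'
    simp at hs'
  · simp at hb
  · have hb' : ([] : List ℕ) ++ [j] = s' ++ [k'] := by simpa using hb
    obtain ⟨rfl, rfl⟩ := cc hb'
    simp at hs'
  · rw [app2] at hb
    have := congrArg List.length hb
    simp only [List.length_append, List.length_cons, List.length_nil] at this
    omega
  -- first: C5 (s odd, a = s++[k], b = s++[m,x])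
  · -- C5 ∘ C1
    rw [app2] at hb
    obtain ⟨rfl, rfl⟩ := cc hb
    exact Or.inr (Or.inr (Or.inr (Or.inr (Or.inl
      ⟨s, k, m, j', hkm, hs, rfl, (app2 s m j').symm⟩))))
  · rw [app2] at hb
    obtain ⟨rfl, rfl⟩ := cc hb
    simp only [List.length_append, List.length_cons, List.length_nil] at hs'
    omega
  · rw [app2] at hb; simp at hb
  · rw [app2] at hb
    obtain ⟨rfl, rfl⟩ := cc hb
    simp only [List.length_append, List.length_cons, List.length_nil] at hs'
    omega
  · rw [app2, app2] at hb
    obtain ⟨h3, rfl⟩ := cc hb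
    obtain ⟨rfl, rfl⟩ := cc h3
    omega
  -- first: C6 (s even, a = s++[m,x], b = s++[k])
  · -- C6 ∘ C1
    obtain ⟨rfl, rfl⟩ := cc hb
    exact Or.inr (Or.inr (Or.inr (Or.inr (Or.inr
      ⟨s, j', m, x, le_trans h' hkm, hs, rfl, rfl⟩))))
  · obtain ⟨rfl, rfl⟩ := cc hb; omega
  · simp at hb
  · obtain ⟨rfl, rfl⟩ := cc hb; omega
  · rw [app2] at hb
    obtain ⟨rfl, rfl⟩ := cc hb
    simp only [List.length_append, List.length_cons, List.length_nil] at hs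
    omega

lemma R_antisymm {a b : List ℕ} (h1 : R a b) (h2 : R b a) : a = b := by
  rcases h1 with rfl | h1
  · rfl
  rcases h2 with rfl | h2
  · rfl
  rcases h1 with ⟨s, i, j, hji, hs, rfl, rfl⟩ | ⟨s, i, j, hij, hs, rfl, rfl⟩ |
      ⟨rfl, j, rfl⟩ | ⟨s, k, m, x, hkm, hs, rfl, rfl⟩ | ⟨s, k, m, x, hkm, hs, rfl, rfl⟩ <;>
    rcases h2 with ⟨s', i', j', h', hs', hb, ha⟩ | ⟨s', i', j', h', hs', hb, ha⟩ |
      ⟨hb, j', ha⟩ | ⟨s', k', m', x', h', hs', hb, ha⟩ | ⟨s', k', m', x', h', hs', hb, ha⟩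
  -- first C1
  · obtain ⟨rfl, rfl⟩ := cc hb
    obtain ⟨-, rfl⟩ := cc ha
    have : i = j := le_antisymm h' hji
    rw [this]
  · obtain ⟨rfl, rfl⟩ := cc hb; omega
  · simp at hb
  · obtain ⟨rfl, rfl⟩ := cc hb; omega
  · rw [app2] at hb
    obtain ⟨rfl, rfl⟩ := cc hb
    have := congrArg List.length ha
    simp only [List.length_append, List.length_cons, List.length_nil] at this
    omega
  -- first C2
  · obtain ⟨rfl, rfl⟩ := cc hb; omega
  · obtain ⟨rfl, rfl⟩ := cc hb
    obtain ⟨-, rfl⟩ := cc ha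
    have : i = j := le_antisymm hij h'
    rw [this]
  · simp at hb
  · obtain ⟨rfl, rfl⟩ := cc hb
    have := congrArg List.length ha
    simp only [List.length_append, List.length_cons, List.length_nil] at this
    omega
  · rw [app2] at hb
    obtain ⟨rfl, rfl⟩ := cc hb
    have := congrArg List.length ha
    simp only [List.length_append, List.length_cons, List.length_nil] at this
    omega
  -- first C3 : a = [], b = [j]
  · have hb' : ([] : List ℕ) ++ [j] = s' ++ [i'] := by simpa using hb
    obtain ⟨rfl, rfl⟩ := cc hb'
    simp at ha
  · have hb' : ([] : List ℕ) ++ [j] = s' ++ [i'] := by simpa using hb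
    obtain ⟨rfl, rfl⟩ := cc hb'
    simp at hs'
  · simp at hb
  · have hb' : ([] : List ℕ) ++ [j] = s' ++ [k'] := by simpa using hb
    obtain ⟨rfl, rfl⟩ := cc hb'
    simp at hs'
  · rw [app2] at hb
    have := congrArg List.length hb
    simp only [List.length_append, List.length_cons, List.length_nil] at this
    omega
  -- first C5 : a = s++[k], b = s++[m,x]
  · rw [app2] at hb
    obtain ⟨rfl, rfl⟩ := cc hb
    have := congrArg List.length ha
    simp only [List.length_append, List.length_cons, List.length_nil] at this
    omega
  · rw [app2] at hb
    obtain ⟨rfl, rfl⟩ := cc hb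
    simp only [List.length_append, List.length_cons, List.length_nil] at hs'
    omega
  · rw [app2] at hb; simp at hb
  · rw [app2] at hb
    obtain ⟨rfl, rfl⟩ := cc hb
    simp only [List.length_append, List.length_cons, List.length_nil] at hs'
    omega
  · rw [app2, app2] at hb
    obtain ⟨h3, rfl⟩ := cc hb
    obtain ⟨rfl, rfl⟩ := cc h3
    omega
  -- first C6 : a = s++[m,x], b = s++[k]
  · obtain ⟨rfl, rfl⟩ := cc hb
    have := congrArg List.length ha
    simp only [List.length_append, List.length_cons, List.length_nil] at this
    omega
  · obtain ⟨rfl, rfl⟩ := cc hb; omega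
  · simp at hb
  · obtain ⟨rfl, rfl⟩ := cc hb; omega
  · rw [app2] at hb
    obtain ⟨rfl, rfl⟩ := cc hb
    simp only [List.length_append, List.length_cons, List.length_nil] at hs
    omega

lemma R_le {a b : List ℕ} (h : R a b) : TreeLe a b := by
  rcases h with rfl | ⟨s, i, j, hji, hs, rfl, rfl⟩ | ⟨s, i, j, hij, hs, rfl, rfl⟩ |
      ⟨rfl, j, rfl⟩ | ⟨s, k, m, x, hkm, hs, rfl, rfl⟩ | ⟨s, k, m, x, hkm, hs, rfl, rfl⟩
  · exact Relation.ReflTransGen.refl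
  · rcases eq_or_lt_of_le hji with rfl | hlt
    · exact Relation.ReflTransGen.refl
    · rcases List.eq_nil_or_concat' s with rfl | ⟨t, m, rfl⟩
      · exact Relation.ReflTransGen.single (TreeStep.root_sib hlt)
      · rw [← app2, ← app2]
        refine Relation.ReflTransGen.single (TreeStep.odd_sib t ?_ m i j hlt)
        rw [Nat.odd_iff]
        simp only [List.length_append, List.length_cons, List.length_nil] at hs
        omega
  · rcases eq_or_lt_of_le hij with rfl | hlt
    · exact Relation.ReflTransGen.refl
    · rcases List.eq_nil_or_concat' s with rfl | ⟨t, m, rfl⟩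
      · simp at hs
      · rw [← app2, ← app2]
        refine Relation.ReflTransGen.single (TreeStep.even_sib t ?_ m i j hlt)
        rw [Nat.even_iff]
        simp only [List.length_append, List.length_cons, List.length_nil] at hs
        omega
  · exact Relation.ReflTransGen.single (TreeStep.root_lt j)
  · exact Relation.ReflTransGen.single
      (TreeStep.odd_down s (Nat.odd_iff.mpr hs) m k x hkm)
  · exact Relation.ReflTransGen.single
      (TreeStep.even_up s (Nat.even_iff.mpr hs) m k x hkm)

lemma le_R {a b : List ℕ} (h : TreeLe a b) : R a b := by
  induction h with
  | refl => exact R_refl a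
  | tail _ hstep ih => exact R_trans ih (step_R hstep)

lemma treeLe_iff {a b : List ℕ} : TreeLe a b ↔ R a b := ⟨le_R, R_le⟩

lemma treeLe_antisymm {a b : List ℕ} (h1 : TreeLe a b) (h2 : TreeLe b a) : a = b :=
  R_antisymm (le_R h1) (le_R h2)

/- ### Children of a node, and the pinning lemmas -/

/-- even node is below its children -/
lemma even_le_child {w : List ℕ} (hw : w.length % 2 = 0) (i : ℕ) : TreeLe w (w ++ [i]) := by
  rcases List.eq_nil_or_concat' w with rfl | ⟨t, k, rfl⟩
  · exact R_le (Or.inr (Or.inr (Or.inr (Or.inl ⟨rfl, i, rfl⟩))))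
  · refine R_le (Or.inr (Or.inr (Or.inr (Or.inr (Or.inl ⟨t, k, k, i, le_rfl, ?_, rfl, (app2 t k i).symm⟩)))))
    simp [List.length_append] at hw ⊢
    omega

/-- children of an even node are decreasing -/
lemma even_child_mono {w : List ℕ} (hw : w.length % 2 = 0) {i j : ℕ} (hij : i ≤ j) :
    TreeLe (w ++ [j]) (w ++ [i]) :=
  R_le (Or.inr (Or.inl ⟨w, j, i, hij, hw, rfl, rfl⟩))

/-- odd node is above its children -/
lemma child_le_odd {w : List ℕ} (hw : w.length % 2 = 1) (i : ℕ) : TreeLe (w ++ [i]) w := by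
  rcases List.eq_nil_or_concat' w with rfl | ⟨t, m, rfl⟩
  · simp at hw
  · refine R_le (Or.inr (Or.inr (Or.inr (Or.inr (Or.inr ⟨t, m, m, i, le_rfl, ?_, (app2 t m i).symm, rfl⟩)))))
    simp [List.length_append] at hw ⊢
    omega

/-- children of an odd node are increasing -/
lemma odd_child_mono {w : List ℕ} (hw : w.length % 2 = 1) {i j : ℕ} (hij : i ≤ j) :
    TreeLe (w ++ [i]) (w ++ [j]) :=
  R_le (Or.inr (Or.inr (Or.inl ⟨w, i, j, hij, hw, rfl, rfl⟩)))

/-- Pinning lemma at an even node: the only element above `w` and below all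
children of `w` is `w` itself. -/
lemma even_pin {w z : List ℕ} (hw : w.length % 2 = 0)
    (h1 : TreeLe w z) (h2 : ∀ i, TreeLe z (w ++ [i])) : z = w := by
  rcases le_R h1 with rfl | ⟨s, i, j, hji, hs, rfl, rfl⟩ | ⟨s, i, j, hij, hs, rfl, rfl⟩ |
      ⟨rfl, j, rfl⟩ | ⟨s, k, m, x, hkm, hs, rfl, rfl⟩ | ⟨s, k, m, x, hkm, hs, rfl, rfl⟩
  · rfl
  · -- w = s ++ [i], s even : parity contradiction
    simp only [List.length_append, List.length_cons, List.length_nil] at hw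
    omega
  · -- w = s ++ [i] (s odd), z = s ++ [j], i ≤ j
    rcases le_R (h2 0) with heq | ⟨s1, i1, j1, h1', hs1, hz, ht⟩ | ⟨s1, i1, j1, h1', hs1, hz, ht⟩ |
        ⟨hz, j1, ht⟩ | ⟨s1, k1, m1, x1, h1', hs1, hz, ht⟩ | ⟨s1, k1, m1, x1, h1', hs1, hz, ht⟩
    · have := congrArg List.length heq
      simp only [List.length_append, List.length_cons, List.length_nil] at this
      omega
    · obtain ⟨rfl, rfl⟩ := cc hz
      obtain ⟨h3, -⟩ := cc ht
      have := congrArg List.length h3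
      simp only [List.length_append, List.length_cons, List.length_nil] at this
      omega
    · obtain ⟨rfl, rfl⟩ := cc hz
      obtain ⟨h3, -⟩ := cc ht
      have := congrArg List.length h3
      simp only [List.length_append, List.length_cons, List.length_nil] at this
      omega
    · simp at hz
    · -- live case
      obtain ⟨rfl, rfl⟩ := cc hz
      rw [app2] at ht
      obtain ⟨h3, -⟩ := cc ht
      obtain ⟨-, rfl⟩ := cc h3
      have : i = j := le_antisymm hij h1'
      rw [this]
    · rw [app2] at hz
      obtain ⟨h3, rfl⟩ := cc hz
      obtain ⟨h4, -⟩ := cc ht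
      have l3 := congrArg List.length h3
      have l4 := congrArg List.length h4
      simp only [List.length_append, List.length_cons, List.length_nil] at l3 l4
      omega
  · -- w = [], z = [j]
    rcases le_R (h2 (j + 1)) with heq | ⟨s1, i1, j1, h1', hs1, hz, ht⟩ |
        ⟨s1, i1, j1, h1', hs1, hz, ht⟩ | ⟨hz, j1, ht⟩ |
        ⟨s1, k1, m1, x1, h1', hs1, hz, ht⟩ | ⟨s1, k1, m1, x1, h1', hs1, hz, ht⟩
    · simp at heq
    · have hz' : ([] : List ℕ) ++ [j] = s1 ++ [i1] := by simpa using hz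
      obtain ⟨rfl, rfl⟩ := cc hz'
      have ht' : ([] : List ℕ) ++ (j + 1) :: [] = ([] : List ℕ) ++ [j1] := by simpa using ht
      obtain ⟨-, rfl⟩ := cc ht'
      omega
    · have hz' : ([] : List ℕ) ++ [j] = s1 ++ [i1] := by simpa using hz
      obtain ⟨rfl, rfl⟩ := cc hz'
      simp at hs1
    · simp at hz
    · have hz' : ([] : List ℕ) ++ [j] = s1 ++ [k1] := by simpa using hz
      obtain ⟨rfl, rfl⟩ := cc hz'
      simp at hs1
    · rw [app2] at hz
      have := congrArg List.length hz
      simp only [List.length_append, List.length_cons, List.length_nil] at this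
      omega
  · -- w = s ++ [k], z = s ++ [m, x], s odd : impossible using h2 (x+1)
    rcases le_R (h2 (x + 1)) with heq | ⟨s1, i1, j1, h1', hs1, hz, ht⟩ |
        ⟨s1, i1, j1, h1', hs1, hz, ht⟩ | ⟨hz, j1, ht⟩ |
        ⟨s1, k1, m1, x1, h1', hs1, hz, ht⟩ | ⟨s1, k1, m1, x1, h1', hs1, hz, ht⟩
    · rw [app2] at heq
      obtain ⟨-, h4⟩ := cc heq
      omega
    · rw [app2] at hz
      obtain ⟨rfl, rfl⟩ := cc hz
      obtain ⟨h3, rfl⟩ := cc ht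
      obtain ⟨-, rfl⟩ := cc h3
      omega
    · rw [app2] at hz
      obtain ⟨rfl, rfl⟩ := cc hz
      simp only [List.length_append, List.length_cons, List.length_nil] at hs1
      omega
    · rw [app2] at hz
      simp at hz
    · rw [app2] at hz
      obtain ⟨rfl, rfl⟩ := cc hz
      simp only [List.length_append, List.length_cons, List.length_nil] at hs1
      omega
    · rw [app2, app2] at hz
      obtain ⟨h3, rfl⟩ := cc hz
      obtain ⟨rfl, rfl⟩ := cc h3
      omega
  · -- w = s ++ [m, x], z = s ++ [k], s even : impossible using h2 0
    rcases le_R (h2 0) with heq | ⟨s1, i1, j1, h1', hs1, hz, ht⟩ |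
        ⟨s1, i1, j1, h1', hs1, hz, ht⟩ | ⟨hz, j1, ht⟩ |
        ⟨s1, k1, m1, x1, h1', hs1, hz, ht⟩ | ⟨s1, k1, m1, x1, h1', hs1, hz, ht⟩
    · have := congrArg List.length heq
      simp only [List.length_append, List.length_cons, List.length_nil] at this
      omega
    · obtain ⟨rfl, rfl⟩ := cc hz
      obtain ⟨h3, -⟩ := cc ht
      have := congrArg List.length h3
      simp only [List.length_append, List.length_cons, List.length_nil] at this
      omega
    · obtain ⟨rfl, rfl⟩ := cc hz
      omega
    · simp at hz
    · obtain ⟨rfl, rfl⟩ := cc hz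
      omega
    · rw [app2] at hz
      obtain ⟨h3, rfl⟩ := cc hz
      have := congrArg List.length h3
      simp only [List.length_append, List.length_cons, List.length_nil] at this
      omega

/-- Pinning lemma at an odd node: the only element below `w` and above all
children of `w` is `w` itself. -/
lemma odd_pin {w z : List ℕ} (hw : w.length % 2 = 1)
    (h1 : TreeLe z w) (h2 : ∀ i, TreeLe (w ++ [i]) z) : z = w := by
  rcases le_R h1 with rfl | ⟨s, i, j, hji, hs, rfl, rfl⟩ | ⟨s, i, j, hij, hs, rfl, rfl⟩ |
      ⟨rfl, j, rfl⟩ | ⟨s, k, m, x, hkm, hs, rfl, rfl⟩ | ⟨s, k, m, x, hkm, hs, rfl, rfl⟩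
  · rfl
  · -- z = s ++ [i], w = s ++ [j], j ≤ i, s even
    rcases le_R (h2 0) with heq | ⟨s1, i1, j1, h1', hs1, hz, ht⟩ |
        ⟨s1, i1, j1, h1', hs1, hz, ht⟩ | ⟨hz, j1, ht⟩ |
        ⟨s1, k1, m1, x1, h1', hs1, hz, ht⟩ | ⟨s1, k1, m1, x1, h1', hs1, hz, ht⟩
    · have := congrArg List.length heq
      simp only [List.length_append, List.length_cons, List.length_nil] at this
      omega
    · obtain ⟨rfl, rfl⟩ := cc hz
      simp only [List.length_append, List.length_cons, List.length_nil] at hs1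
      omega
    · obtain ⟨rfl, rfl⟩ := cc hz
      have := congrArg List.length ht
      simp only [List.length_append, List.length_cons, List.length_nil] at this
      omega
    · simp at hz
    · obtain ⟨rfl, rfl⟩ := cc hz
      rw [app2] at ht
      have := congrArg List.length ht
      simp only [List.length_append, List.length_cons, List.length_nil] at this
      omega
    · -- live case
      rw [app2] at hz
      obtain ⟨h3, -⟩ := cc hz
      obtain ⟨rfl, rfl⟩ := cc h3
      obtain ⟨-, rfl⟩ := cc ht
      have : i = j := le_antisymm h1' hji
      rw [this]
  · -- z = s ++ [i], w = s ++ [j], s odd : parity contradiction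
    simp only [List.length_append, List.length_cons, List.length_nil] at hw
    omega
  · -- z = [], w = [j]
    rcases le_R (h2 0) with heq | ⟨s1, i1, j1, h1', hs1, hz, ht⟩ |
        ⟨s1, i1, j1, h1', hs1, hz, ht⟩ | ⟨hz, j1, ht⟩ |
        ⟨s1, k1, m1, x1, h1', hs1, hz, ht⟩ | ⟨s1, k1, m1, x1, h1', hs1, hz, ht⟩
    · simp at heq
    · simp at ht
    · simp at ht
    · simp at ht
    · rw [app2] at ht
      simp at ht
    · simp at ht
  · -- z = s ++ [k], w = s ++ [m, x], s odd : impossible using h2 0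
    rcases le_R (h2 0) with heq | ⟨s1, i1, j1, h1', hs1, hz, ht⟩ |
        ⟨s1, i1, j1, h1', hs1, hz, ht⟩ | ⟨hz, j1, ht⟩ |
        ⟨s1, k1, m1, x1, h1', hs1, hz, ht⟩ | ⟨s1, k1, m1, x1, h1', hs1, hz, ht⟩
    · have := congrArg List.length heq
      simp only [List.length_append, List.length_cons, List.length_nil] at this
      omega
    · obtain ⟨rfl, rfl⟩ := cc hz
      simp only [List.length_append, List.length_cons, List.length_nil] at hs1
      omega
    · obtain ⟨rfl, rfl⟩ := cc hz
      have := congrArg List.length ht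
      simp only [List.length_append, List.length_cons, List.length_nil] at this
      omega
    · simp at hz
    · obtain ⟨rfl, rfl⟩ := cc hz
      rw [app2] at ht
      have := congrArg List.length ht
      simp only [List.length_append, List.length_cons, List.length_nil] at this
      omega
    · rw [app2 s1 m1 x1] at hz
      obtain ⟨h3, -⟩ := cc hz
      obtain ⟨rfl, rfl⟩ := cc ht
      have := congrArg List.length h3
      simp only [List.length_append, List.length_cons, List.length_nil] at this
      omega
  · -- z = s ++ [m, x], w = s ++ [k], s even : impossible using h2 (x+1)
    rcases le_R (h2 (x + 1)) with heq | ⟨s1, i1, j1, h1', hs1, hz, ht⟩ |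
        ⟨s1, i1, j1, h1', hs1, hz, ht⟩ | ⟨hz, j1, ht⟩ |
        ⟨s1, k1, m1, x1, h1', hs1, hz, ht⟩ | ⟨s1, k1, m1, x1, h1', hs1, hz, ht⟩
    · rw [app2] at heq
      obtain ⟨h3, h4⟩ := cc heq
      obtain ⟨-, -⟩ := cc h3
      omega
    · obtain ⟨rfl, rfl⟩ := cc hz
      simp only [List.length_append, List.length_cons, List.length_nil] at hs1
      omega
    · obtain ⟨rfl, rfl⟩ := cc hz
      rw [app2] at ht
      obtain ⟨h3, rfl⟩ := cc ht
      obtain ⟨-, -⟩ := cc h3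
      omega
    · simp at hz
    · obtain ⟨rfl, rfl⟩ := cc hz
      rw [app2, app2] at ht
      obtain ⟨h3, rfl⟩ := cc ht
      have := congrArg List.length h3
      simp only [List.length_append, List.length_cons, List.length_nil] at this
      omega
    · rw [app2] at hz
      obtain ⟨h3, rfl⟩ := cc hz
      obtain ⟨rfl, rfl⟩ := cc h3
      rw [app2] at ht
      obtain ⟨h4, -⟩ := cc ht
      have := congrArg List.length h4
      simp only [List.length_append, List.length_cons, List.length_nil] at this
      omega

end TreeAux

/-- The alternating tree poset `P` is not representable: there is no compact topology
on `P` which is totally order-disconnected with respect to its order (i.e. making it a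
Priestley space). -/
theorem tree_not_representable :
    ¬ ∃ τ : TopologicalSpace (List ℕ),
        @CompactSpace (List ℕ) τ ∧
          ∀ a b : List ℕ, ¬ TreeLe b a →
            ∃ U : Set (List ℕ), @IsClopen _ τ U ∧
              (∀ u ∈ U, ∀ v, TreeLe v u → v ∈ U) ∧ a ∈ U ∧ b ∉ U := by
  rintro ⟨τ, hcomp, hsep⟩
  letI := τ
  haveI := hcomp
  -- down-sets and up-sets of points are closed
  have hD : ∀ a : List ℕ, IsClosed {z | TreeLe z a} := by
    intro a
    rw [← isOpen_compl_iff]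
    rw [isOpen_iff_forall_mem_open]
    intro b hb
    obtain ⟨U, hU, hdown, haU, hbU⟩ := hsep a b hb
    refine ⟨Uᶜ, ?_, hU.1.isOpen_compl, hbU⟩
    intro z hz hza
    exact hz (hdown a haU z hza)
  have hUp : ∀ a : List ℕ, IsClosed {z | TreeLe a z} := by
    intro a
    rw [← isOpen_compl_iff]
    rw [isOpen_iff_forall_mem_open]
    intro b hb
    obtain ⟨U, hU, hdown, hbU, haU⟩ := hsep b a hb
    refine ⟨U, ?_, hU.2, hbU⟩
    intro z hz haz
    exact haU (hdown z hz a haz)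
  -- Hausdorff
  haveI ht2 : T2Space (List ℕ) := by
    constructor
    intro a b hab
    by_cases h : TreeLe b a
    · have h2 : ¬ TreeLe a b := fun h3 => hab (TreeAux.treeLe_antisymm h3 h)
      obtain ⟨U, hU, hdown, hbU, haU⟩ := hsep b a h2
      exact ⟨Uᶜ, U, hU.1.isOpen_compl, hU.2, haU, hbU, disjoint_compl_left⟩
    · obtain ⟨U, hU, hdown, haU, hbU⟩ := hsep a b h
      exact ⟨U, Uᶜ, hU.2, hU.1.isOpen_compl, haU, hbU, disjoint_compl_right⟩
  -- every singleton fails to be open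
  have hiso : ∀ w : List ℕ, ¬ IsOpen ({w} : Set (List ℕ)) := by
    intro w hopen
    -- the sequence of children of w
    set x : ℕ → List ℕ := fun i => w ++ [i] with hx
    haveI : (Filter.map x Filter.atTop).NeBot := Filter.map_neBot
    obtain ⟨z, hz⟩ := exists_clusterPt_of_compactSpace (Filter.map x Filter.atTop)
    -- z belongs to the closure of every tail
    have htail : ∀ C : Set (List ℕ), IsClosed C → (∃ N : ℕ, ∀ i ≥ N, x i ∈ C) → z ∈ C := by
      intro C hC hmem
      obtain ⟨N, hN⟩ := hmem
      have hle : Filter.map x Filter.atTop ≤ Filter.principal C := by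
        rw [Filter.le_principal_iff, Filter.mem_map]
        exact Filter.mem_of_superset (Filter.Ici_mem_atTop N) (fun i hi => hN i hi)
      have : ClusterPt z (Filter.principal C) := hz.mono hle
      rw [← mem_closure_iff_clusterPt] at this
      rwa [hC.closure_eq] at this
    have hzw : z = w := by
      rcases Nat.even_or_odd w.length with hpar | hpar
      · -- even node: children decrease to w
        have h1 : TreeLe w z := by
          refine htail _ (hUp w) ⟨0, fun i _ => ?_⟩
          exact TreeAux.even_le_child (Nat.even_iff.mp hpar) i
        have h2 : ∀ i, TreeLe z (w ++ [i]) := by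
          intro i
          refine htail _ (hD (w ++ [i])) ⟨i, fun k hk => ?_⟩
          exact TreeAux.even_child_mono (Nat.even_iff.mp hpar) hk
        exact TreeAux.even_pin (Nat.even_iff.mp hpar) h1 h2
      · -- odd node: children increase to w
        have h1 : TreeLe z w := by
          refine htail _ (hD w) ⟨0, fun i _ => ?_⟩
          exact TreeAux.child_le_odd (Nat.odd_iff.mp hpar) i
        have h2 : ∀ i, TreeLe (w ++ [i]) z := by
          intro i
          refine htail _ (hUp (w ++ [i])) ⟨i, fun k hk => ?_⟩
          exact TreeAux.odd_child_mono (Nat.odd_iff.mp hpar) hk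
        exact TreeAux.odd_pin (Nat.odd_iff.mp hpar) h1 h2
    -- but then the open set {w} must contain some child of w : contradiction
    subst hzw
    have hmem : {z} ∈ nhds z := hopen.mem_nhds rfl
    obtain ⟨y, hy1, hy2⟩ := (clusterPt_iff_nonempty.mp hz) hmem (Filter.range_mem_map)
    obtain ⟨n, rfl⟩ := hy2
    have hn : x n = z := hy1
    have := congrArg List.length hn
    simp [hx] at this
  -- Baire category: a nonempty countable compact Hausdorff space has an isolated point
  have hdense : Dense (⋂ w : List ℕ, ({w}ᶜ : Set (List ℕ))) := by
    refine dense_iInter_of_isOpen (fun w => isClosed_singleton.isOpen_compl) (fun w => ?_)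
    exact dense_compl_singleton_iff_not_open.mpr (hiso w)
  have : (⋂ w : List ℕ, ({w}ᶜ : Set (List ℕ))) = ∅ := by
    ext z
    simp only [Set.mem_iInter, Set.mem_compl_iff, Set.mem_singleton_iff, Set.mem_empty_iff_false,
      iff_false, not_forall, not_not]
    exact ⟨z, rfl⟩
  rw [this] at hdense
  obtain ⟨y, hy⟩ := hdense.nonempty
  exact hy
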